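/- Under gradient flow on the overparameterized objective φ(W₁,…,Wₙ) = ℓ(Wₙ⋯W₁), for each j = 1,…,n−1 the quantity Wⱼ₊₁(t)ᵀWⱼ₊₁(t) − Wⱼ(t)Wⱼ(t)ᵀ is constant in time: for all t ≥ 0, Wⱼ₊₁(t)ᵀWⱼ₊₁(t) − Wⱼ(t)Wⱼ(t)ᵀ = Wⱼ₊₁(0)ᵀWⱼ₊₁(0) − Wⱼ(0)Wⱼ(0)ᵀ. -/

import Mathlib

open Matrix

/-- Product `W (m-1) * ⋯ * W j` of a chain of matrices with dimensions given by `d`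
(the identity when `m = j`, junk when `m < j`). -/
noncomputable def chain (d : ℕ → ℕ) (W : ∀ k : ℕ, Matrix (Fin (d (k + 1))) (Fin (d k)) ℝ)
    (j : ℕ) : (m : ℕ) → Matrix (Fin (d m)) (Fin (d j)) ℝ
  | 0 => if h : j = 0 then by subst h; exact 1 else 0
  | m + 1 => if h : j = m + 1 then by subst h; exact 1 else W m * chain d W j m

lemma chain_self (d : ℕ → ℕ) (W : ∀ k : ℕ, Matrix (Fin (d (k + 1))) (Fin (d k)) ℝ)
    (j : ℕ) : chain d W j j = 1 := by
  cases j <;> simp [chain]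

lemma chain_step (d : ℕ → ℕ) (W : ∀ k : ℕ, Matrix (Fin (d (k + 1))) (Fin (d k)) ℝ)
    (j : ℕ) : ∀ m : ℕ, j < m → chain d W j m = chain d W (j+1) m * W j := by
  intro m
  induction m with
  | zero => omega
  | succ m ih =>
    intro h
    rcases Nat.lt_succ_iff_lt_or_eq.mp h with h' | h'
    · rw [chain, dif_neg (by omega), ih h', chain, dif_neg (by omega), Matrix.mul_assoc]
    · subst h'
      rw [chain, dif_neg (by omega), chain_self, chain, dif_pos rfl]
      simp

/-- Under gradient flow on the overparameterized objective `φ(W₁,…,Wₙ) = ℓ(Wₙ ⋯ W₁)`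
(where `gradℓ` is the gradient of the loss `ℓ`, and the flow equations are
`Ẇⱼ(t) = −(Wₙ⋯Wⱼ₊₁)ᵀ(t) ∇ℓ(Wₙ(t)⋯W₁(t)) (Wⱼ₋₁⋯W₁)ᵀ(t)`, here with 0-based layer
indices `k = 0,…,n−1`), the quantity `Wⱼ₊₁(t)ᵀ Wⱼ₊₁(t) − Wⱼ(t) Wⱼ(t)ᵀ` is constant in time:
for all `t ≥ 0` it equals its value at `t = 0`. -/
theorem balancedness_conserved (d : ℕ → ℕ) (n : ℕ)
    (gradℓ : Matrix (Fin (d n)) (Fin (d 0)) ℝ → Matrix (Fin (d n)) (Fin (d 0)) ℝ)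
    (W : ∀ k : ℕ, ℝ → Matrix (Fin (d (k + 1))) (Fin (d k)) ℝ)
    (W' : ∀ k : ℕ, ℝ → Matrix (Fin (d (k + 1))) (Fin (d k)) ℝ)
    (hderiv : ∀ k < n, ∀ (t : ℝ) (i : Fin (d (k + 1))) (i' : Fin (d k)),
      HasDerivAt (fun s => W k s i i') (W' k t i i') t)
    (hflow : ∀ k < n, ∀ t : ℝ,
      W' k t = -((chain d (fun k' => W k' t) (k + 1) n)ᵀ *
        gradℓ (chain d (fun k' => W k' t) 0 n) * (chain d (fun k' => W k' t) 0 k)ᵀ)) :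
    ∀ j : ℕ, j + 1 < n → ∀ t : ℝ, 0 ≤ t →
      (W (j + 1) t)ᵀ * W (j + 1) t - W j t * (W j t)ᵀ
        = (W (j + 1) 0)ᵀ * W (j + 1) 0 - W j 0 * (W j 0)ᵀ := by
  intro j hj1 t ht
  have hj0 : j < n := by omega
  have hzero : ∀ s : ℝ,
      (W' (j+1) s)ᵀ * W (j+1) s + (W (j+1) s)ᵀ * W' (j+1) s
        - (W' j s * (W j s)ᵀ + W j s * (W' j s)ᵀ) = 0 := by
    intro s
    have h1 := hflow (j+1) hj1 s
    have h0 := hflow j hj0 s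
    have hc1 : chain d (fun k' => W k' s) (j+1) n
        = chain d (fun k' => W k' s) (j+2) n * W (j+1) s := chain_step d _ (j+1) n hj1
    have hc0 : chain d (fun k' => W k' s) 0 (j+1) = W j s * chain d (fun k' => W k' s) 0 j := by
      rw [chain, dif_neg (by omega)]
    rw [hc1] at h0
    rw [hc0] at h1
    rw [h0, h1]
    simp only [Matrix.transpose_neg, Matrix.transpose_mul, Matrix.transpose_transpose,
      Matrix.neg_mul, Matrix.mul_neg, Matrix.mul_assoc]
    abel
  have hent : ∀ (i i' : Fin (d (j+1))),
      ∀ s : ℝ, HasDerivAt (fun u => ((W (j+1) u)ᵀ * W (j+1) u - W j u * (W j u)ᵀ) i i') 0 s := by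
    intro i i' s
    have hD : HasDerivAt
        (fun u => (∑ k, W (j+1) u k i * W (j+1) u k i') - ∑ k, W j u i k * W j u i' k)
        ((∑ k, (W' (j+1) s k i * W (j+1) s k i' + W (j+1) s k i * W' (j+1) s k i'))
          - ∑ k, (W' j s i k * W j s i' k + W j s i k * W' j s i' k)) s := by
      exact (HasDerivAt.fun_sum fun k _ =>
          ((hderiv (j+1) hj1 s k i).mul (hderiv (j+1) hj1 s k i'))).sub
        (HasDerivAt.fun_sum fun k _ => ((hderiv j hj0 s i k).mul (hderiv j hj0 s i' k)))
    have hval : (∑ k, (W' (j+1) s k i * W (j+1) s k i' + W (j+1) s k i * W' (j+1) s k i'))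
          - ∑ k, (W' j s i k * W j s i' k + W j s i k * W' j s i' k)
        = ((W' (j+1) s)ᵀ * W (j+1) s + (W (j+1) s)ᵀ * W' (j+1) s
            - (W' j s * (W j s)ᵀ + W j s * (W' j s)ᵀ)) i i' := by
      simp [Matrix.sub_apply, Matrix.add_apply, Matrix.mul_apply, Matrix.transpose_apply,
        Finset.sum_add_distrib]
    rw [hval, hzero s] at hD
    simpa [Matrix.sub_apply, Matrix.mul_apply, Matrix.transpose_apply] using hD
  ext i i'
  exact is_const_of_deriv_eq_zero (fun x => (hent i i' x).differentiableAt)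
    (fun x => (hent i i' x).deriv) t 0
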